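/- For every prime p ≡ 3 (mod 4) with p ≥ 7 there exists a circulant complex Hadamard matrix of order p that is not equivalent to the Fourier matrix F_p. -/

import Mathlib

open Matrix

/-- `H` is a complex Hadamard matrix: unimodular entries and `H Hᴴ = n • I`. -/
def IsCHadamard {n : Type*} [Fintype n] [DecidableEq n] (H : Matrix n n ℂ) : Prop :=
  (∀ i j, ‖H i j‖ = 1) ∧
    H * H.conjTranspose = (Fintype.card n : ℂ) • 1

/-- Equivalence of complex Hadamard matrices: `H = P₁ D₁ K D₂ P₂` with permutation
matrices `P₁, P₂` and unitary diagonal matrices `D₁, D₂`. -/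
def HadEquiv {n : Type*} [Fintype n] [DecidableEq n] (H K : Matrix n n ℂ) : Prop :=
  ∃ (σ τ : Equiv.Perm n) (d₁ d₂ : n → ℂ),
    (∀ i, ‖d₁ i‖ = 1) ∧ (∀ i, ‖d₂ i‖ = 1) ∧
    H = σ.permMatrix ℂ * Matrix.diagonal d₁ * K * Matrix.diagonal d₂ * τ.permMatrix ℂ

/-- A matrix is circulant if its `(j,k)` entry depends only on `k - j`. -/
def IsCirculant {p : ℕ} (H : Matrix (Fin p) (Fin p) ℂ) : Prop :=
  ∃ g : Fin p → ℂ, ∀ j k, H j k = g (k - j)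

/-- The Fourier matrix of order `p`. -/
noncomputable def FourierMatrix (p : ℕ) : Matrix (Fin p) (Fin p) ℂ :=
  Matrix.of fun j k =>
    Complex.exp (2 * Real.pi * Complex.I * ((j : ℕ) * (k : ℕ)) / p)

noncomputable section
namespace Stmt4Aux

variable (p : ℕ)

/-- real part of the Björck number -/
def aR : ℝ := (1 - (p:ℝ)) / (1 + p)

/-- the Björck number -/
def α : ℂ := ((aR p : ℝ) : ℂ) + ((2 * Real.sqrt p / (1 + p) : ℝ) : ℂ) * Complex.I

lemma one_add_ne (p : ℕ) : (1 + (p:ℝ)) ≠ 0 := by positivity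

lemma hab : (aR p)^2 + (2 * Real.sqrt p / (1 + (p:ℝ)))^2 = 1 := by
  have h := Real.sq_sqrt (Nat.cast_nonneg (α := ℝ) p)
  have h0 := one_add_ne p
  unfold aR
  field_simp
  nlinarith [h]

lemma conj_α : (starRingEnd ℂ) (α p) = 2 * ((aR p : ℝ) : ℂ) - α p := by
  simp only [α, _root_.map_add, _root_.map_mul, map_ofNat, Complex.conj_ofReal, Complex.conj_I]
  ring

lemma α_sq : (α p)^2 = 2 * ((aR p : ℝ) : ℂ) * α p - 1 := by
  have h := hab p
  have h' : ((aR p : ℝ) : ℂ)^2 + ((2 * Real.sqrt p / (1 + (p:ℝ)) : ℝ) : ℂ)^2 = 1 := by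
    rw [← Complex.ofReal_pow, ← Complex.ofReal_pow, ← Complex.ofReal_add, h,
      Complex.ofReal_one]
  unfold α
  linear_combination ((2 * Real.sqrt p / (1 + (p:ℝ)) : ℝ) : ℂ)^2 * Complex.I_sq - h'

lemma α_mul_conj : α p * (starRingEnd ℂ) (α p) = 1 := by
  rw [conj_α]
  linear_combination - α_sq p

lemma abs_α : ‖α p‖ = 1 := by
  have h := α_mul_conj p
  rw [Complex.mul_conj] at h
  have : Complex.normSq (α p) = 1 := by exact_mod_cast h
  rw [Complex.norm_def, this, Real.sqrt_one]

lemma aR_bounds (hp7 : 7 ≤ p) : -1 < aR p ∧ 2 * aR p < -1 := by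
  have hp : (7:ℝ) ≤ p := by exact_mod_cast hp7
  have h1p : (0:ℝ) < 1 + p := by linarith
  constructor
  · rw [aR, lt_div_iff₀ h1p]
    linarith
  · rw [aR, show (2:ℝ) * ((1-(p:ℝ))/(1+p)) = (2*(1-(p:ℝ)))/(1+p) by ring,
      div_lt_iff₀ h1p]
    linarith

lemma α_pow_ne (hp7 : 7 ≤ p) (hp0 : p ≠ 0) : (α p)^p ≠ 1 := by
  intro hpow
  -- α is an algebraic integer
  have hint : IsIntegral ℤ (α p) := by
    refine ⟨Polynomial.X ^ p - 1, ?_, ?_⟩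
    · simpa using Polynomial.monic_X_pow_sub_C (1:ℤ) hp0
    · simp [Polynomial.eval₂_sub, hpow]
  have hconj : (starRingEnd ℂ) (α p) = (α p)^(p-1) := by
    have h1 : (α p)^(p-1) * α p = 1 := by
      rw [← pow_succ, Nat.sub_add_cancel (Nat.one_le_iff_ne_zero.2 hp0), hpow]
    have h2 := α_mul_conj p
    have hαne : α p ≠ 0 := by
      intro h; rw [h] at h2; simp at h2
    apply mul_left_cancel₀ hαne
    rw [h2, mul_comm] at *
    rw [← h1]
    ring
  have hsum : IsIntegral ℤ (α p + (starRingEnd ℂ) (α p)) := by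
    rw [hconj]; exact hint.add (hint.pow _)
  have hval : α p + (starRingEnd ℂ) (α p) = 2 * ((aR p : ℝ) : ℂ) := by
    rw [conj_α]; ring
  set q : ℚ := 2 * (1 - p) / (1 + p) with hq
  have hcast : (q : ℂ) = 2 * ((aR p : ℝ) : ℂ) := by
    rw [hq, aR]
    push_cast
    ring
  have hqint : IsIntegral ℤ (q : ℂ) := by rw [hcast, ← hval]; exact hsum
  have : IsIntegral ℤ q := by
    have : (q : ℂ) = algebraMap ℚ ℂ q := by norm_cast
    rw [this] at hqint
    exact (isIntegral_algebraMap_iff (algebraMap ℚ ℂ).injective).1 hqint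
  obtain ⟨z, hz⟩ := IsIntegrallyClosed.isIntegral_iff.mp this
  -- q = 2(1-p)/(1+p) ∈ (-2,-1)
  have hp : (7:ℚ) ≤ p := by exact_mod_cast hp7
  have h1p : (0:ℚ) < 1 + p := by linarith
  have hq1 : -2 < q := by
    rw [hq, lt_div_iff₀ h1p]
    linarith
  have hq2 : q < -1 := by
    rw [hq, div_lt_iff₀ h1p]
    linarith
  have hz' : (z : ℚ) = q := by exact_mod_cast hz
  rw [← hz'] at hq1 hq2
  have hz1 : (-2:ℤ) < z := by exact_mod_cast hq1
  have hz2 : (z:ℤ) < -1 := by exact_mod_cast hq2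
  omega

end Stmt4Aux

noncomputable section
namespace Stmt4Aux2
open Finset

variable (p : ℕ) [Fact p.Prime]

/-- quadratic character with complex values -/
def c (x : ZMod p) : ℂ := (quadraticChar (ZMod p) x : ℤ)

variable {p}

lemma ringChar_ne_two (hmod : p % 4 = 3) : ringChar (ZMod p) ≠ 2 := by
  rw [ZMod.ringChar_zmod_n]
  omega

lemma c_zero : c p 0 = 0 := by simp [c]

lemma c_sum (hmod : p % 4 = 3) : ∑ x : ZMod p, c p x = 0 := by
  have h := quadraticChar_sum_zero (F := ZMod p) (ringChar_ne_two hmod)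
  calc ∑ x : ZMod p, c p x
      = ((∑ x : ZMod p, quadraticChar (ZMod p) x : ℤ) : ℂ) := by
        rw [Int.cast_sum]; rfl
    _ = 0 := by rw [h]; simp

lemma c_one : c p 1 = 1 := by simp [c]

lemma c_neg (hmod : p % 4 = 3) (x : ZMod p) : c p (-x) = - c p x := by
  have h : quadraticChar (ZMod p) (-x) = - quadraticChar (ZMod p) x := by
    rw [show (-x : ZMod p) = -1 * x by ring, _root_.map_mul,
      quadraticChar_neg_one (ringChar_ne_two hmod), ZMod.card p,
      ZMod.χ₄_nat_three_mod_four hmod, neg_one_mul]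
  simp [c, h]

/-- the key convolution character sum -/
lemma c_conv (hmod : p % 4 = 3) (s : ZMod p) (hs : s ≠ 0) :
    ∑ x : ZMod p, c p (x + s) * c p x = -1 := by
  have hchi : ∀ x : ZMod p, x ≠ 0 →
      c p (x + s) * c p x = c p (1 + s * x⁻¹) := by
    intro x hx
    have h1 : (1 + s * x⁻¹) * (x * x) = (x + s) * x := by
      field_simp
    have h2 : c p ((1 + s * x⁻¹) * (x * x)) = c p ((x+s)*x) := by rw [h1]
    have h3 : (quadraticChar (ZMod p)) (x*x) = 1 := by
      have := quadraticChar_sq_one' (F := ZMod p) hx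
      rwa [sq] at this
    simp only [c, _root_.map_mul, h3, mul_one] at h2 ⊢
    push_cast at h2 ⊢
    rw [h2]
  rw [← Finset.sum_subset (Finset.subset_univ ({0}ᶜ : Finset (ZMod p)))]
  · rw [Finset.sum_congr rfl (fun x hx => hchi x (by
      simpa [Finset.mem_compl] using hx))]
    have hbij : ∑ x ∈ ({0}ᶜ : Finset (ZMod p)), c p (1 + s * x⁻¹)
        = ∑ y ∈ ({1}ᶜ : Finset (ZMod p)), c p y := by
      apply Finset.sum_nbij' (i := fun x => 1 + s * x⁻¹) (j := fun y => s * (y - 1)⁻¹)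
      · intro x hx
        simp only [Finset.mem_compl, Finset.mem_singleton] at hx ⊢
        intro h
        have : s * x⁻¹ = 0 := by linear_combination h
        rcases mul_eq_zero.1 this with h' | h'
        · exact hs h'
        · exact hx (by simpa using inv_eq_zero.1 h')
      · intro y hy
        simp only [Finset.mem_compl, Finset.mem_singleton] at hy ⊢
        have hy1 : y - 1 ≠ 0 := sub_ne_zero.2 hy
        exact mul_ne_zero hs (inv_ne_zero hy1)
      · intro x hx
        simp only [Finset.mem_compl, Finset.mem_singleton] at hx
        rw [show (1 + s * x⁻¹ - 1) = s * x⁻¹ by ring, mul_inv, inv_inv]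
        field_simp
      · intro y hy
        simp only [Finset.mem_compl, Finset.mem_singleton] at hy
        have hy1 : y - 1 ≠ 0 := sub_ne_zero.2 hy
        rw [mul_inv, inv_inv]
        field_simp
        ring
      · intro x hx
        rfl
    rw [hbij]
    have hsplit := Finset.sum_compl_add_sum ({1} : Finset (ZMod p)) (c p)
    rw [Finset.sum_singleton, c_one] at hsplit
    have hc := c_sum (p := p) hmod
    linear_combination hsplit + hc
  · intro x _ hx
    simp only [Finset.mem_compl, Finset.mem_singleton, not_not] at hx
    rw [hx, c_zero, mul_zero]

end Stmt4Aux2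

noncomputable section
namespace Stmt4Aux3
open Finset Stmt4Aux Stmt4Aux2

variable (p : ℕ) [Fact p.Prime]

def g (x : ZMod p) : ℂ := if quadraticChar (ZMod p) x = -1 then Stmt4Aux.α p else 1

def u : ℂ := (1 + α p) / 2
def v : ℂ := (1 - α p) / 2

def d (x : ZMod p) : ℂ := if x = 0 then 1 else 0

variable {p}

lemma abs_g (x : ZMod p) : ‖g p x‖ = 1 := by
  unfold g
  split
  · exact abs_α p
  · simp

lemma g_zero : g p 0 = 1 := by simp [g]

lemma g_of_not_sq {x : ZMod p} (h : quadraticChar (ZMod p) x = -1) : g p x = α p := by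
  simp [g, h]

lemma g_of_ne {x : ZMod p} (h : quadraticChar (ZMod p) x ≠ -1) : g p x = 1 := by
  rw [g, if_neg h]

lemma g_eq (x : ZMod p) : g p x = u p + v p * c p x + v p * d p x := by
  rcases eq_or_ne x 0 with rfl | hx
  · rw [g_zero, c_zero, d]
    simp [u, v]
    ring
  · have hd : d p x = 0 := by simp [d, hx]
    rcases quadraticChar_dichotomy (F := ZMod p) hx with h | h
    · rw [g_of_ne (by rw [h]; norm_num), hd, c, h]
      push_cast
      rw [u, v]; ring
    · rw [g_of_not_sq h, hd, c, h]
      push_cast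
      rw [u, v]; ring

lemma conj_c (x : ZMod p) : (starRingEnd ℂ) (c p x) = c p x := by
  simp [c]

lemma conj_d (x : ZMod p) : (starRingEnd ℂ) (d p x) = d p x := by
  rw [d]; split <;> simp

lemma sum_d : ∑ x : ZMod p, d p x = 1 := by
  simp [d]

lemma aC_rel : ((p:ℂ) + 1) * ((aR p : ℝ) : ℂ) = 1 - p := by
  have h : aR p * (1 + (p:ℝ)) = 1 - p := div_mul_cancel₀ _ (one_add_ne p)
  have h' : ((aR p : ℝ) : ℂ) * (1 + (p:ℂ)) = 1 - p := by
    exact_mod_cast congrArg (Complex.ofReal) h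
  linear_combination h'

/-- diagonal entries -/
lemma sum_diag : ∑ x : ZMod p, g p x * (starRingEnd ℂ) (g p x) = p := by
  have h : ∀ x : ZMod p, g p x * (starRingEnd ℂ) (g p x) = 1 := by
    intro x
    rw [Complex.mul_conj, Complex.normSq_eq_norm_sq, abs_g]
    norm_num
  rw [Finset.sum_congr rfl (fun x _ => h x)]
  simp [ZMod.card]

/-- off-diagonal orthogonality -/
lemma sum_off (hmod : p % 4 = 3) (s : ZMod p) (hs : s ≠ 0) :
    ∑ x : ZMod p, g p (x + s) * (starRingEnd ℂ) (g p x) = 0 := by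
  set U := u p with hU
  set V := v p with hV
  set CU := (starRingEnd ℂ) (u p) with hCU
  set CV := (starRingEnd ℂ) (v p) with hCV
  have expand : ∀ x : ZMod p, g p (x + s) * (starRingEnd ℂ) (g p x)
      = U*CU + (U*CV) * c p x + (U*CV) * d p x + (V*CU) * c p (x+s)
        + (V*CV) * (c p (x+s) * c p x) + (V*CV) * (c p (x+s) * d p x)
        + (V*CU) * d p (x+s) + (V*CV) * (d p (x+s) * c p x)
        + (V*CV) * (d p (x+s) * d p x) := by
    intro x
    rw [g_eq (x + s), g_eq x, _root_.map_add, _root_.map_add, _root_.map_mul, _root_.map_mul, conj_c, conj_d,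
      ← hU, ← hV, ← hCU, ← hCV]
    ring
  rw [Finset.sum_congr rfl (fun x _ => expand x)]
  simp only [Finset.sum_add_distrib, ← Finset.mul_sum]
  have h1 : ∑ x : ZMod p, c p x = 0 := c_sum hmod
  have h2 : ∑ x : ZMod p, d p x = 1 := sum_d
  have h3 : ∑ x : ZMod p, c p (x + s) = 0 :=
    (Fintype.sum_equiv (Equiv.addRight s) _ (c p) (fun x => rfl)).trans (c_sum hmod)
  have h4 : ∑ x : ZMod p, c p (x+s) * c p x = -1 := c_conv hmod s hs
  have h5 : ∑ x : ZMod p, c p (x+s) * d p x = c p s := by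
    simp [d, mul_ite]
  have h6 : ∑ x : ZMod p, d p (x+s) = 1 :=
    (Fintype.sum_equiv (Equiv.addRight s) _ (d p) (fun x => rfl)).trans sum_d
  have h7 : ∑ x : ZMod p, d p (x+s) * c p x = c p (-s) := by
    have : ∀ x : ZMod p, d p (x+s) * c p x = if x = -s then c p (-s) else 0 := by
      intro x
      rw [d]
      by_cases hx : x = -s
      · simp [hx]
      · have : x + s ≠ 0 := fun h => hx (by linear_combination h)
        simp [this, hx]
    rw [Finset.sum_congr rfl (fun x _ => this x)]
    simp
  have h8 : ∑ x : ZMod p, d p (x+s) * d p x = 0 := by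
    apply Finset.sum_eq_zero
    intro x _
    rcases eq_or_ne x 0 with rfl | hx
    · simp [d, hs]
    · simp [d, hx]
  rw [h1, h2, h3, h4, h5, h6, h7, h8, Finset.sum_const, Finset.card_univ,
    ZMod.card, nsmul_eq_mul, c_neg hmod s]
  -- now pure algebra
  have hsq := α_sq p
  have hA := aC_rel (p := p)
  have hcu : (starRingEnd ℂ) (u p) = (1 + (2 * ((aR p : ℝ) : ℂ) - α p)) / 2 := by
    rw [u, map_div₀, _root_.map_add, _root_.map_one, conj_α, map_ofNat]
  have hcv : (starRingEnd ℂ) (v p) = (1 - (2 * ((aR p : ℝ) : ℂ) - α p)) / 2 := by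
    rw [v, map_div₀, _root_.map_sub, _root_.map_one, conj_α, map_ofNat]
  rw [hU, hV, hCU, hCV, hcu, hcv, u, v]
  linear_combination ((3 - (p:ℂ))/4) * hsq + (1/2) * hA

end Stmt4Aux3

open Matrix
noncomputable section
namespace Stmt4Aux4
open Finset Stmt4Aux Stmt4Aux2 Stmt4Aux3

variable (p : ℕ) [Fact p.Prime]

def eE : Fin p ≃ ZMod p where
  toFun m := (m.val : ZMod p)
  invFun x := ⟨x.val, ZMod.val_lt x⟩
  left_inv m := by
    ext
    simp [ZMod.val_natCast, Nat.mod_eq_of_lt m.isLt]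
  right_inv x := ZMod.natCast_rightInverse x

variable {p}

lemma e_sub (j k : Fin p) : eE p (k - j) = eE p k - eE p j := by
  have hj : (j:ℕ) ≤ p := le_of_lt j.isLt
  simp only [eE, Equiv.coe_fn_mk, Fin.sub_def]
  rw [ZMod.natCast_mod]
  push_cast [ZMod.natCast_self, Nat.cast_sub hj]
  ring

lemma e_zero : eE p 0 = 0 := by
  simp [eE]

/-- the Björck circulant matrix -/
def BM : Matrix (Fin p) (Fin p) ℂ := Matrix.of fun j k => g p (eE p (k - j))

lemma BM_apply (j k : Fin p) : BM j k = g p (eE p k - eE p j) := by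
  rw [BM, Matrix.of_apply, e_sub]

lemma BM_hadamard (hmod : p % 4 = 3) :
    BM * (BM (p := p)).conjTranspose = (Fintype.card (Fin p) : ℂ) • 1 := by
  ext j k
  rw [Matrix.mul_apply]
  have hterm : ∀ m : Fin p, BM j m * (BM (p := p)).conjTranspose m k
      = g p ((eE p m - eE p k) + (eE p k - eE p j))
        * (starRingEnd ℂ) (g p (eE p m - eE p k)) := by
    intro m
    rw [Matrix.conjTranspose_apply, BM_apply, BM_apply,
      show eE p m - eE p j = (eE p m - eE p k) + (eE p k - eE p j) by ring]
    rfl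
  rw [Finset.sum_congr rfl (fun m _ => hterm m)]
  have hre : ∑ m : Fin p, g p ((eE p) m - (eE p) k + ((eE p) k - (eE p) j))
        * (starRingEnd ℂ) (g p ((eE p) m - (eE p) k))
      = ∑ y : ZMod p, g p (y + ((eE p) k - (eE p) j)) * (starRingEnd ℂ) (g p y) :=
    Fintype.sum_equiv ((eE p).trans (Equiv.subRight (eE p k))) _ _ (fun m => rfl)
  rw [hre]
  rcases eq_or_ne j k with rfl | hjk
  · rw [show eE p j - eE p j = 0 by ring]
    simp only [add_zero]
    rw [Stmt4Aux3.sum_diag]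
    simp [Matrix.one_apply_eq]
  · have hs : eE p k - eE p j ≠ 0 :=
      fun h => hjk (((eE p).injective (sub_eq_zero.1 h)).symm)
    rw [sum_off hmod _ hs, Matrix.smul_apply, Matrix.one_apply_ne hjk, smul_zero]

lemma unimodular_mul_conj {z : ℂ} (h : ‖z‖ = 1) :
    z * (starRingEnd ℂ) z = 1 := by
  rw [Complex.mul_conj, Complex.normSq_eq_norm_sq, h]
  norm_num

lemma F_pow_p (hp0 : p ≠ 0) (a b : Fin p) : (FourierMatrix p a b) ^ p = 1 := by
  have hpC : (p:ℂ) ≠ 0 := Nat.cast_ne_zero.2 hp0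
  rw [FourierMatrix, Matrix.of_apply, ← Complex.exp_nat_mul]
  rw [show (p:ℂ) * (2 * Real.pi * Complex.I * ((a:ℕ) * (b:ℕ)) / p)
      = ((a:ℕ) * (b:ℕ) : ℕ) * (2 * Real.pi * Complex.I) by
    push_cast; field_simp]
  exact Complex.exp_nat_mul_two_pi_mul_I _

lemma BM_not_equiv (hmod : p % 4 = 3) (hp7 : 7 ≤ p) :
    ¬ HadEquiv (BM (p := p)) (FourierMatrix p) := by
  have hp0 : p ≠ 0 := by omega
  rintro ⟨σ, τ, d₁, d₂, hd₁, hd₂, hEq⟩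
  -- entrywise formula
  have entry : ∀ i j, BM (p := p) i j
      = d₁ (σ i) * FourierMatrix p (σ i) (τ.symm j) * d₂ (τ.symm j) := by
    intro i j
    rw [hEq, PEquiv.mul_toMatrix_toPEquiv, Matrix.submatrix_apply, id_eq,
      Matrix.mul_diagonal, Matrix.mul_assoc (σ.permMatrix ℂ),
      PEquiv.toMatrix_toPEquiv_mul, Matrix.submatrix_apply, id_eq,
      Matrix.diagonal_mul]
  -- a nonresidue
  obtain ⟨n, hn⟩ := quadraticChar_exists_neg_one (ringChar_ne_two hmod)
  set n0 : Fin p := (eE p).symm n with hn0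
  have hen0 : eE p n0 = n := (eE p).apply_symm_apply n
  -- the Haagerup invariant equals α p
  have hval : BM (p := p) 0 n0 * BM (p := p) n0 0
      * (starRingEnd ℂ) (BM (p := p) 0 0)
      * (starRingEnd ℂ) (BM (p := p) n0 n0) = α p := by
    have h1 : BM (p := p) 0 n0 = α p := by
      rw [BM_apply, hen0, e_zero, sub_zero]
      exact g_of_not_sq hn
    have h2 : BM (p := p) n0 0 = 1 := by
      rw [BM_apply, hen0, e_zero, zero_sub]
      apply g_of_ne
      rw [show (-n : ZMod p) = -1 * n by ring, _root_.map_mul,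
        quadraticChar_neg_one (ringChar_ne_two hmod), ZMod.card p,
        ZMod.χ₄_nat_three_mod_four hmod, hn]
      norm_num
    have h3 : BM (p := p) 0 0 = 1 := by
      rw [BM_apply, sub_self, g_zero]
    have h4 : BM (p := p) n0 n0 = 1 := by
      rw [BM_apply, sub_self, g_zero]
    rw [h1, h2, h3, h4]
    simp
  -- but then its p-th power is 1
  have hW : BM (p := p) 0 n0 * BM (p := p) n0 0
      * (starRingEnd ℂ) (BM (p := p) 0 0)
      * (starRingEnd ℂ) (BM (p := p) n0 n0)
      = FourierMatrix p (σ 0) (τ.symm n0) * FourierMatrix p (σ n0) (τ.symm 0)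
        * (starRingEnd ℂ) (FourierMatrix p (σ 0) (τ.symm 0))
        * (starRingEnd ℂ) (FourierMatrix p (σ n0) (τ.symm n0)) := by
    rw [entry 0 n0, entry n0 0, entry 0 0, entry n0 n0]
    simp only [_root_.map_mul]
    have e1 := unimodular_mul_conj (hd₁ (σ 0))
    have e2 := unimodular_mul_conj (hd₁ (σ n0))
    have e3 := unimodular_mul_conj (hd₂ (τ.symm 0))
    have e4 := unimodular_mul_conj (hd₂ (τ.symm n0))
    set K := FourierMatrix p (σ 0) (τ.symm n0) * FourierMatrix p (σ n0) (τ.symm 0)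
        * (starRingEnd ℂ) (FourierMatrix p (σ 0) (τ.symm 0))
        * (starRingEnd ℂ) (FourierMatrix p (σ n0) (τ.symm n0)) with hK
    set X2 := d₁ (σ n0) * (starRingEnd ℂ) (d₁ (σ n0)) with hX2
    set X3 := d₂ (τ.symm 0) * (starRingEnd ℂ) (d₂ (τ.symm 0)) with hX3
    set X4 := d₂ (τ.symm n0) * (starRingEnd ℂ) (d₂ (τ.symm n0)) with hX4
    linear_combination (K * X2 * X3 * X4) * e1 + (K * X3 * X4) * e2
      + (K * X4) * e3 + K * e4
  have hpow : (α p) ^ p = 1 := by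
    rw [← hval, hW]
    rw [mul_pow, mul_pow, mul_pow, ← _root_.map_pow, ← _root_.map_pow,
      F_pow_p hp0, F_pow_p hp0, F_pow_p hp0, F_pow_p hp0]
    simp
  exact α_pow_ne p hp7 hp0 hpow

end Stmt4Aux4

theorem stmt4 (p : ℕ) (hp : p.Prime) (hmod : p % 4 = 3) (hp7 : 7 ≤ p) :
    ∃ H : Matrix (Fin p) (Fin p) ℂ,
      IsCHadamard H ∧ IsCirculant H ∧ ¬ HadEquiv H (FourierMatrix p) := by
  haveI : Fact p.Prime := ⟨hp⟩
  refine ⟨Stmt4Aux4.BM (p := p), ⟨?_, Stmt4Aux4.BM_hadamard hmod⟩,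
    ⟨fun t => Stmt4Aux3.g p (Stmt4Aux4.eE p t), fun j k => rfl⟩,
    Stmt4Aux4.BM_not_equiv hmod hp7⟩
  intro i j
  rw [Stmt4Aux4.BM_apply]
  exact Stmt4Aux3.abs_g _
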